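/- Let f : (0,1] × (0,1] → ℝ be a function such that for all probability mass functions p_{XY} on a finite product space with marginals p_X, p_Y and all points (x,y) with positive joint mass, one has -log p_{XY}(x,y) ≥ f(p_X(x), p_Y(y)) ≥ max(-log p_X(x), -log p_Y(y)). Then f(a,b) = max(-log a, -log b) for all a, b ∈ (0,1]. -/
import Mathlib


theorem stmt_1 (f : ℝ → ℝ → ℝ)
    (hf : ∀ (α β : Type) [Fintype α] [Fintype β] (p : α × β → ℝ),
      (∀ z, 0 ≤ p z) → (∑ z, p z) = 1 →
      ∀ x y, 0 < p (x, y) →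
        -Real.log (p (x, y)) ≥ f (∑ b, p (x, b)) (∑ a, p (a, y)) ∧
        f (∑ b, p (x, b)) (∑ a, p (a, y)) ≥
          max (-Real.log (∑ b, p (x, b))) (-Real.log (∑ a, p (a, y)))) :
    ∀ a b : ℝ, a ∈ Set.Ioc (0 : ℝ) 1 → b ∈ Set.Ioc (0 : ℝ) 1 →
      f a b = max (-Real.log a) (-Real.log b) := by
  intro a b ha hb
  obtain ⟨ha0, ha1⟩ := ha
  obtain ⟨hb0, hb1⟩ := hb
  set m := min a b with hm
  have hm0 : 0 < m := lt_min ha0 hb0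
  set p : Bool × Bool → ℝ := fun z =>
    match z with
    | (true, true) => m
    | (true, false) => a - m
    | (false, true) => b - m
    | (false, false) => 1 - a - b + m
    with hp
  have hmax : 1 - a - b + m = 1 - max a b := by
    rcases le_total a b with h | h
    · rw [hm, min_eq_left h, max_eq_right h]; ring
    · rw [hm, min_eq_right h, max_eq_left h]; ring
  have hpos : ∀ z, 0 ≤ p z := by
    rintro ⟨x, y⟩
    cases x <;> cases y <;> simp only [hp]
    · rw [hmax]; linarith [max_le ha1 hb1]
    · exact sub_nonneg.mpr (min_le_right a b)
    · exact sub_nonneg.mpr (min_le_left a b)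
    · exact hm0.le
  have hsum : (∑ z, p z) = 1 := by
    rw [Fintype.sum_prod_type]
    simp only [Fintype.sum_bool, hp]
    ring
  have hmt : p (true, true) = m := rfl
  have key := hf Bool Bool p hpos hsum true true (by rw [hmt]; exact hm0)
  have hma : (∑ y, p (true, y)) = a := by simp [hp]
  have hmb : (∑ x, p (x, true)) = b := by simp [hp]
  rw [hma, hmb, hmt] at key
  have hlog : -Real.log m = max (-Real.log a) (-Real.log b) := by
    rcases le_total a b with h | h
    · rw [hm, min_eq_left h, max_eq_left]
      exact neg_le_neg (Real.log_le_log ha0 h)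
    · rw [hm, min_eq_right h, max_eq_right]
      exact neg_le_neg (Real.log_le_log hb0 h)
  rw [hlog] at key
  exact le_antisymm key.1 key.2
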